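/- Let σ ∈ (0,1), γ ∈ (0,2), λ > 0, let A : H → Set H and B : H → H be monotone, and let u* ∈ Ω. Suppose w, v ∈ H satisfy w − λB(w) ∈ v + λA(v) and λ‖B(w) − B(v)‖ ≤ σ‖w − v‖, set φ = (w − v) − λ(B(w) − B(v)), assume φ ≠ 0, and let δ = ⟨w − v, φ⟩/‖φ‖² and u⁺ = w − γδφ. Then ‖u⁺ − u*‖² ≤ ‖w − u*‖² − γ(2 − γ)·((1 − σ)/(1 + σ))²·‖w − v‖². -/

import Mathlib

open RealInnerProductSpace

set_option maxHeartbeats 1000000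

/-- One-step contraction inequality in terms of the residual:
`‖u⁺ - u*‖² ≤ ‖w - u*‖² - γ(2 - γ)((1 - σ)/(1 + σ))²‖w - v‖²`. -/
theorem contraction_step_residual_inequality
    {H : Type*} [NormedAddCommGroup H] [InnerProductSpace ℝ H] [CompleteSpace H]
    (σ γ lam : ℝ) (hσ : σ ∈ Set.Ioo (0 : ℝ) 1) (hγ : γ ∈ Set.Ioo (0 : ℝ) 2) (hlam : 0 < lam)
    (A : H → Set H) (B : H → H)
    (hAmono : ∀ u v : H, ∀ a ∈ A u, ∀ b ∈ A v, 0 ≤ ⟪a - b, u - v⟫)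
    (hBmono : ∀ u v : H, 0 ≤ ⟪B u - B v, u - v⟫)
    (ustar : H) (hstar : -B ustar ∈ A ustar)
    (w v : H)
    (hfb : ∃ a ∈ A v, w - lam • B w = v + lam • a)
    (hls : lam * ‖B w - B v‖ ≤ σ * ‖w - v‖)
    (φ : H) (hφdef : φ = (w - v) - lam • (B w - B v)) (hφ : φ ≠ 0)
    (δ : ℝ) (hδ : δ = ⟪w - v, φ⟫ / ‖φ‖ ^ 2)
    (uplus : H) (huplus : uplus = w - (γ * δ) • φ) :
    ‖uplus - ustar‖ ^ 2 ≤
      ‖w - ustar‖ ^ 2 - γ * (2 - γ) * ((1 - σ) / (1 + σ)) ^ 2 * ‖w - v‖ ^ 2 := by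
  obtain ⟨hσ0, hσ1⟩ := hσ
  obtain ⟨hγ0, hγ2⟩ := hγ
  obtain ⟨a, haA, hfba⟩ := hfb
  set p : ℝ := ⟪w - v, φ⟫ with hp
  have hφpos : (0:ℝ) < ‖φ‖ := norm_pos_iff.mpr hφ
  have hφsq : (0:ℝ) < ‖φ‖ ^ 2 := by positivity
  -- w ≠ v
  have hwvpos : (0:ℝ) < ‖w - v‖ := by
    rcases (norm_nonneg (w - v)).lt_or_eq with h | h
    · exact h
    · exfalso
      have hwv0 : w - v = 0 := by
        have := norm_eq_zero.mp h.symm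
        exact this
      have hB0 : ‖B w - B v‖ = 0 := by
        have h1 : lam * ‖B w - B v‖ ≤ 0 := by
          calc lam * ‖B w - B v‖ ≤ σ * ‖w - v‖ := hls
          _ = 0 := by rw [← h]; ring
        nlinarith [norm_nonneg (B w - B v)]
      apply hφ
      rw [hφdef, hwv0, norm_eq_zero.mp hB0, smul_zero, sub_zero]
  -- φ = lam • (a + B v)
  have h1 : w - v = lam • a + lam • B w := by
    have h := hfba
    have h2 : w - v = (w - lam • B w) - v + lam • B w := by abel
    rw [h2, h]; abel
  have hφeq : φ = lam • (a + B v) := by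
    rw [hφdef, h1, smul_sub, smul_add]; abel
  -- 0 ≤ ⟪v - ustar, φ⟫
  have hvφ : (0:ℝ) ≤ ⟪v - ustar, φ⟫ := by
    rw [hφeq, real_inner_smul_right]
    apply mul_nonneg hlam.le
    have hdecomp : a + B v = (a - (-B ustar)) + (B v - B ustar) := by abel
    rw [hdecomp, inner_add_right]
    have ha := hAmono v ustar a haA (-B ustar) hstar
    have hb := hBmono v ustar
    rw [real_inner_comm] at ha hb
    exact add_nonneg ha hb
  have hpw : p ≤ ⟪w - ustar, φ⟫ := by
    have hws : w - ustar = (w - v) + (v - ustar) := by abel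
    rw [hws, inner_add_left]
    linarith
  -- lower bound on p
  have hplow : (1 - σ) * ‖w - v‖ ^ 2 ≤ p := by
    rw [hp, hφdef, inner_sub_right, real_inner_self_eq_norm_sq, real_inner_smul_right]
    have hcs : ⟪w - v, B w - B v⟫ ≤ ‖w - v‖ * ‖B w - B v‖ := real_inner_le_norm _ _
    nlinarith [mul_le_mul_of_nonneg_left hcs hlam.le,
      mul_le_mul_of_nonneg_left hls (norm_nonneg (w - v))]
  have hppos : (0:ℝ) < p := by
    have : (0:ℝ) < (1 - σ) * ‖w - v‖ ^ 2 :=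
      mul_pos (by linarith) (by positivity)
    linarith
  -- upper bound on ‖φ‖
  have hφub : ‖φ‖ ≤ (1 + σ) * ‖w - v‖ := by
    rw [hφdef]
    calc ‖(w - v) - lam • (B w - B v)‖ ≤ ‖w - v‖ + ‖lam • (B w - B v)‖ := norm_sub_le _ _
    _ = ‖w - v‖ + lam * ‖B w - B v‖ := by
        rw [norm_smul, Real.norm_eq_abs, abs_of_pos hlam]
    _ ≤ (1 + σ) * ‖w - v‖ := by nlinarith
  -- key estimate
  have hKt : ((1 - σ) / (1 + σ)) ^ 2 * ‖w - v‖ ^ 2 ≤ δ ^ 2 * ‖φ‖ ^ 2 := by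
    have hdsq : δ ^ 2 * ‖φ‖ ^ 2 = p ^ 2 / ‖φ‖ ^ 2 := by
      rw [hδ]; field_simp
    have hφub2 : ‖φ‖ ^ 2 ≤ (1 + σ) ^ 2 * ‖w - v‖ ^ 2 := by
      nlinarith [mul_self_le_mul_self (norm_nonneg φ) hφub]
    have hp2 : ((1 - σ) * ‖w - v‖ ^ 2) ^ 2 ≤ p ^ 2 :=
      pow_le_pow_left₀ (mul_nonneg (by linarith) (by positivity)) hplow 2
    rw [hdsq, div_pow, div_mul_eq_mul_div,
      div_le_div_iff₀ (by positivity : (0:ℝ) < (1 + σ) ^ 2) hφsq]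
    calc (1 - σ) ^ 2 * ‖w - v‖ ^ 2 * ‖φ‖ ^ 2
        ≤ (1 - σ) ^ 2 * ‖w - v‖ ^ 2 * ((1 + σ) ^ 2 * ‖w - v‖ ^ 2) := by
          exact mul_le_mul_of_nonneg_left hφub2 (by positivity)
      _ = ((1 - σ) * ‖w - v‖ ^ 2) ^ 2 * (1 + σ) ^ 2 := by ring
      _ ≤ p ^ 2 * (1 + σ) ^ 2 := mul_le_mul_of_nonneg_right hp2 (by positivity)
  have hδpos : (0:ℝ) < δ := by
    rw [hδ]; exact div_pos hppos hφsq
  have hδφ : δ * ‖φ‖ ^ 2 = p := by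
    rw [hδ]; field_simp
  -- expansion
  have hexp : ‖uplus - ustar‖ ^ 2 =
      ‖w - ustar‖ ^ 2 - 2 * (γ * δ) * ⟪w - ustar, φ⟫ + (γ * δ) ^ 2 * ‖φ‖ ^ 2 := by
    rw [huplus]
    have h2 : w - (γ * δ) • φ - ustar = (w - ustar) - (γ * δ) • φ := by abel
    rw [h2, norm_sub_sq_real, real_inner_smul_right, norm_smul, mul_pow,
      Real.norm_eq_abs, sq_abs]
    ring
  rw [hexp]
  have h3 : 2 * (γ * δ) * p ≤ 2 * (γ * δ) * ⟪w - ustar, φ⟫ := by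
    apply mul_le_mul_of_nonneg_left hpw
    positivity
  have htp : δ * p = δ ^ 2 * ‖φ‖ ^ 2 := by rw [← hδφ]; ring
  have htp2 : 2 * (γ * δ) * p = 2 * γ * (δ ^ 2 * ‖φ‖ ^ 2) := by rw [← htp]; ring
  have hγγ : (0:ℝ) < γ * (2 - γ) := by nlinarith
  have hK2 := mul_le_mul_of_nonneg_left hKt hγγ.le
  nlinarith [h3, htp2, hK2]
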